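/- The function F is locally Lipschitz on U: for every point p ∈ U there exist δ > 0 and a constant K ≥ 0 such that F is Lipschitz with constant K on the intersection of U with the open ball of radius δ about p. -/

import Mathlib

/-- The speed function: `arctan κ₁ + arctan κ₂` if `κ₁κ₂ ≤ 1`, and
`(π/4)(κ₁κ₂ + 1)` if `κ₁κ₂ > 1`. -/
noncomputable def Fspeed (κ₁ κ₂ : ℝ) : ℝ :=
  if κ₁ * κ₂ ≤ 1 then Real.arctan κ₁ + Real.arctan κ₂
  else (Real.pi / 4) * (κ₁ * κ₂ + 1)

/-- The domain `U = {κ₁κ₂ < 1} ∪ {κ₁ > 0 ∧ κ₂ > 0}`. -/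
def Uset : Set (ℝ × ℝ) := {p | p.1 * p.2 < 1 ∨ (0 < p.1 ∧ 0 < p.2)}

lemma arctan_le_self' {x : ℝ} (hx : 0 ≤ x) : Real.arctan x ≤ x := by
  rcases eq_or_lt_of_le hx with h | h
  · simp [← h]
  · have h1 : 0 < Real.arctan x := by
      have := Real.arctan_strictMono h
      rwa [Real.arctan_zero] at this
    have := Real.lt_tan h1 (Real.arctan_lt_pi_div_two x)
    rw [Real.tan_arctan] at this
    exact this.le

lemma arctan_lipschitz1 : LipschitzWith 1 Real.arctan := by
  apply lipschitzWith_of_nnnorm_deriv_le Real.differentiable_arctan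
  intro x
  rw [Real.deriv_arctan, ← NNReal.coe_le_coe, coe_nnnorm, NNReal.coe_one, Real.norm_eq_abs,
    abs_of_nonneg (by positivity), div_le_one (by positivity)]
  nlinarith [sq_nonneg x]

lemma arctan_diff_le (x y : ℝ) : |Real.arctan x - Real.arctan y| ≤ |x - y| := by
  have := arctan_lipschitz1.dist_le_mul x y
  simpa [Real.dist_eq] using this

lemma key_le {a b : ℝ} (ha : 0 < a) (hs : 4 / Real.pi ≤ a + b) (hm : 1 < a * b) :
    Real.arctan a + Real.arctan b ≤ Real.pi / 4 * (a * b + 1) := by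
  have hab : 0 < a + b := lt_of_lt_of_le (by positivity) hs
  set u := (a * b - 1) / (a + b) with hu
  have hupos : 0 < u := div_pos (by linarith) hab
  have h1 : Real.arctan a + Real.arctan b = Real.arctan u + Real.pi / 2 := by
    rw [Real.arctan_add_eq_add_pi hm ha]
    have he : (a + b) / (1 - a * b) = -u⁻¹ := by
      rw [hu, inv_div, ← div_neg, neg_sub]
    rw [he, Real.arctan_neg, Real.arctan_inv_of_pos hupos]
    ring
  rw [h1]
  have h2 : Real.arctan u ≤ u := arctan_le_self' hupos.le
  have h3 : u ≤ Real.pi / 4 * (a * b - 1) := by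
    rw [hu, div_le_iff₀ hab]
    have hs' : 4 ≤ (a + b) * Real.pi := by
      rw [div_le_iff₀ Real.pi_pos] at hs
      linarith
    have h5 : 0 ≤ (a * b - 1) * ((a + b) * Real.pi - 4) :=
      mul_nonneg (by linarith) (by linarith)
    nlinarith
  linarith

lemma key_ge {a b : ℝ} (ha : 0 < a) (hb : 0 < b) (hs : 4 / Real.pi ≤ a + b)
    (hm : a * b ≤ 1) :
    Real.pi / 4 * (a * b + 1) ≤ Real.arctan a + Real.arctan b := by
  have hab : 0 < a + b := by linarith
  rcases eq_or_lt_of_le hm with h | h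
  · have hb' : b = a⁻¹ := by field_simp; linarith
    rw [hb', Real.arctan_inv_of_pos ha, mul_inv_cancel₀ ha.ne']
    ring_nf
    rfl
    
  · set v := (a + b) / (1 - a * b) with hv
    have hvpos : 0 < v := div_pos hab (by linarith)
    have h1 : Real.arctan a + Real.arctan b = Real.pi / 2 - Real.arctan v⁻¹ := by
      rw [Real.arctan_add h, ← hv, Real.arctan_inv_of_pos hvpos]
      ring
    rw [h1]
    have hvi : v⁻¹ = (1 - a * b) / (a + b) := by rw [hv, inv_div]
    have h2 : Real.arctan v⁻¹ ≤ v⁻¹ := arctan_le_self' (by positivity)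
    have h3 : v⁻¹ ≤ Real.pi / 4 * (1 - a * b) := by
      rw [hvi, div_le_iff₀ hab]
      have hs' : 4 ≤ (a + b) * Real.pi := by
        rw [div_le_iff₀ Real.pi_pos] at hs
        linarith
      have h5 : 0 ≤ (1 - a * b) * ((a + b) * Real.pi - 4) :=
        mul_nonneg (by linarith) (by linarith)
      nlinarith
    linarith

lemma Fspeed_eq_max {a b : ℝ} (ha : 0 < a) (hb : 0 < b) (hs : 4 / Real.pi ≤ a + b) :
    Fspeed a b = max (Real.arctan a + Real.arctan b) (Real.pi / 4 * (a * b + 1)) := by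
  unfold Fspeed
  split_ifs with h
  · exact (max_eq_left (key_ge ha hb hs h)).symm
  · exact (max_eq_right (key_le ha hs (not_le.mp h))).symm

/-- `F` is locally Lipschitz on `U`: near each point of `U` it is Lipschitz
with some constant `K ≥ 0` on the intersection of `U` with a small ball. -/
theorem Fspeed_locally_lipschitz :
    ∀ p ∈ Uset, ∃ δ : ℝ, 0 < δ ∧ ∃ K : NNReal,
      LipschitzOnWith K (fun q : ℝ × ℝ => Fspeed q.1 q.2) (Uset ∩ Metric.ball p δ) := by
  intro p hp
  have hdf : ∀ x y : ℝ × ℝ, dist x.1 y.1 ≤ dist x y := fun x y => by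
    rw [Prod.dist_eq]; exact le_max_left _ _
  have hds : ∀ x y : ℝ × ℝ, dist x.2 y.2 ≤ dist x y := fun x y => by
    rw [Prod.dist_eq]; exact le_max_right _ _
  by_cases hlt : p.1 * p.2 < 1
  · -- product < 1 near p; F is the arctan sum, 2-Lipschitz
    have hopen : IsOpen {q : ℝ × ℝ | q.1 * q.2 < 1} :=
      isOpen_lt (continuous_fst.mul continuous_snd) continuous_const
    obtain ⟨δ, hδpos, hδ⟩ := Metric.isOpen_iff.mp hopen p hlt
    refine ⟨δ, hδpos, 2, ?_⟩
    rw [lipschitzOnWith_iff_dist_le_mul]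
    intro x hx y hy
    have hx1 : x.1 * x.2 ≤ 1 := (hδ hx.2).le
    have hy1 : y.1 * y.2 ≤ 1 := (hδ hy.2).le
    have hFx : Fspeed x.1 x.2 = Real.arctan x.1 + Real.arctan x.2 := if_pos hx1
    have hFy : Fspeed y.1 y.2 = Real.arctan y.1 + Real.arctan y.2 := if_pos hy1
    simp only [hFx, hFy, Real.dist_eq]
    have h1 := arctan_diff_le x.1 y.1
    have h2 := arctan_diff_le x.2 y.2
    have h3 : |x.1 - y.1| ≤ dist x y := by rw [← Real.dist_eq]; exact hdf x y
    have h4 : |x.2 - y.2| ≤ dist x y := by rw [← Real.dist_eq]; exact hds x y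
    have : |Real.arctan x.1 + Real.arctan x.2 - (Real.arctan y.1 + Real.arctan y.2)|
        ≤ |Real.arctan x.1 - Real.arctan y.1| + |Real.arctan x.2 - Real.arctan y.2| := by
      have : |Real.arctan x.1 - Real.arctan y.1 + (Real.arctan x.2 - Real.arctan y.2)|
          ≤ |Real.arctan x.1 - Real.arctan y.1| + |Real.arctan x.2 - Real.arctan y.2| :=
        abs_add_le (Real.arctan x.1 - Real.arctan y.1) (Real.arctan x.2 - Real.arctan y.2)
      convert this using 2
      ring
    push_cast
    linarith
  · -- p.1 * p.2 ≥ 1, p positive; use the max representation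
    obtain ⟨hp1, hp2⟩ : 0 < p.1 ∧ 0 < p.2 := hp.resolve_left hlt
    have hge : 1 ≤ p.1 * p.2 := not_lt.mp hlt
    have hsum2 : 2 ≤ p.1 + p.2 := by nlinarith [sq_nonneg (p.1 - p.2)]
    set δ : ℝ := min (min p.1 p.2) (1/4) with hδdef
    have hδpos : 0 < δ := by
      apply lt_min (lt_min hp1 hp2) (by norm_num)
    set B : ℝ := max p.1 p.2 + 1 with hB
    set C : ℝ := max 2 (Real.pi / 4 * (2 * B)) with hC
    have hC2 : (2:ℝ) ≤ C := le_max_left _ _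
    have hC0 : (0:ℝ) ≤ C := by linarith
    refine ⟨δ, hδpos, C.toNNReal, ?_⟩
    rw [lipschitzOnWith_iff_dist_le_mul]
    -- facts valid for any point in the ball
    have hball : ∀ q : ℝ × ℝ, q ∈ Metric.ball p δ →
        0 < q.1 ∧ 0 < q.2 ∧ 4 / Real.pi ≤ q.1 + q.2 ∧ |q.1| ≤ B ∧ |q.2| ≤ B := by
      intro q hq
      rw [Metric.mem_ball] at hq
      have hq1 : |q.1 - p.1| < δ := by
        rw [← Real.dist_eq]; exact lt_of_le_of_lt (hdf q p) hq
      have hq2 : |q.2 - p.2| < δ := by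
        rw [← Real.dist_eq]; exact lt_of_le_of_lt (hds q p) hq
      rw [abs_lt] at hq1 hq2
      have hδ1 : δ ≤ p.1 := le_trans (min_le_left _ _) (min_le_left _ _)
      have hδ2 : δ ≤ p.2 := le_trans (min_le_left _ _) (min_le_right _ _)
      have hδ3 : δ ≤ 1/4 := min_le_right _ _
      have hq1pos : 0 < q.1 := by linarith
      have hq2pos : 0 < q.2 := by linarith
      refine ⟨hq1pos, hq2pos, ?_, ?_, ?_⟩
      · have hπ : (3:ℝ) < Real.pi := Real.pi_gt_three
        have : 4 / Real.pi ≤ 4 / 3 := by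
          apply div_le_div_of_nonneg_left (by norm_num) (by norm_num) hπ.le
        have hsum : 3/2 ≤ q.1 + q.2 := by linarith
        linarith
      · rw [abs_of_pos hq1pos]
        have : p.1 ≤ max p.1 p.2 := le_max_left _ _
        linarith
      · rw [abs_of_pos hq2pos]
        have : p.2 ≤ max p.1 p.2 := le_max_right _ _
        linarith
    intro x hx y hy
    obtain ⟨hx1, hx2, hxs, hxb1, hxb2⟩ := hball x hx.2
    obtain ⟨hy1, hy2, hys, hyb1, hyb2⟩ := hball y hy.2
    rw [Fspeed_eq_max hx1 hx2 hxs, Fspeed_eq_max hy1 hy2 hys, Real.dist_eq]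
    have hmax := abs_max_sub_max_le_max
      (Real.arctan x.1 + Real.arctan x.2) (Real.pi / 4 * (x.1 * x.2 + 1))
      (Real.arctan y.1 + Real.arctan y.2) (Real.pi / 4 * (y.1 * y.2 + 1))
    have hd1 : |x.1 - y.1| ≤ dist x y := by rw [← Real.dist_eq]; exact hdf x y
    have hd2 : |x.2 - y.2| ≤ dist x y := by rw [← Real.dist_eq]; exact hds x y
    have hdist0 : 0 ≤ dist x y := dist_nonneg
    -- arctan branch
    have hA : |Real.arctan x.1 + Real.arctan x.2 - (Real.arctan y.1 + Real.arctan y.2)|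
        ≤ 2 * dist x y := by
      have h1 := arctan_diff_le x.1 y.1
      have h2 := arctan_diff_le x.2 y.2
      have habs : |Real.arctan x.1 + Real.arctan x.2 - (Real.arctan y.1 + Real.arctan y.2)|
          ≤ |Real.arctan x.1 - Real.arctan y.1| + |Real.arctan x.2 - Real.arctan y.2| := by
        have : |Real.arctan x.1 - Real.arctan y.1 + (Real.arctan x.2 - Real.arctan y.2)|
            ≤ |Real.arctan x.1 - Real.arctan y.1| + |Real.arctan x.2 - Real.arctan y.2| :=
          abs_add_le (Real.arctan x.1 - Real.arctan y.1)
          (Real.arctan x.2 - Real.arctan y.2)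
        convert this using 2
        ring
      linarith
    -- quadratic branch
    have hQ : |Real.pi / 4 * (x.1 * x.2 + 1) - Real.pi / 4 * (y.1 * y.2 + 1)|
        ≤ Real.pi / 4 * (2 * B) * dist x y := by
      have hprod : |x.1 * x.2 - y.1 * y.2| ≤ 2 * B * dist x y := by
        have hid : x.1 * x.2 - y.1 * y.2 = x.1 * (x.2 - y.2) + y.2 * (x.1 - y.1) := by ring
        calc |x.1 * x.2 - y.1 * y.2|
            ≤ |x.1 * (x.2 - y.2)| + |y.2 * (x.1 - y.1)| := by rw [hid]; exact abs_add_le _ _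
          _ = |x.1| * |x.2 - y.2| + |y.2| * |x.1 - y.1| := by rw [abs_mul, abs_mul]
          _ ≤ B * dist x y + B * dist x y := by
              have t1 := mul_le_mul hxb1 hd2 (abs_nonneg _) (le_trans (abs_nonneg _) hxb1)
              have t2 := mul_le_mul hyb2 hd1 (abs_nonneg _) (le_trans (abs_nonneg _) hyb2)
              linarith
          _ = 2 * B * dist x y := by ring
      have : Real.pi / 4 * (x.1 * x.2 + 1) - Real.pi / 4 * (y.1 * y.2 + 1)
          = Real.pi / 4 * (x.1 * x.2 - y.1 * y.2) := by ring
      rw [this, abs_mul, abs_of_nonneg (by positivity : (0:ℝ) ≤ Real.pi / 4)]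
      calc Real.pi / 4 * |x.1 * x.2 - y.1 * y.2|
          ≤ Real.pi / 4 * (2 * B * dist x y) := by
            apply mul_le_mul_of_nonneg_left hprod (by positivity)
        _ = Real.pi / 4 * (2 * B) * dist x y := by ring
    have hCC : (C.toNNReal : ℝ) = C := Real.coe_toNNReal C hC0
    rw [hCC]
    have hCA : 2 * dist x y ≤ C * dist x y :=
      mul_le_mul_of_nonneg_right hC2 hdist0
    have hCQ : Real.pi / 4 * (2 * B) * dist x y ≤ C * dist x y :=
      mul_le_mul_of_nonneg_right (le_max_right _ _) hdist0
    calc |max (Real.arctan x.1 + Real.arctan x.2) (Real.pi / 4 * (x.1 * x.2 + 1)) -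
          max (Real.arctan y.1 + Real.arctan y.2) (Real.pi / 4 * (y.1 * y.2 + 1))|
        ≤ max |Real.arctan x.1 + Real.arctan x.2 - (Real.arctan y.1 + Real.arctan y.2)|
            |Real.pi / 4 * (x.1 * x.2 + 1) - Real.pi / 4 * (y.1 * y.2 + 1)| := hmax
      _ ≤ C * dist x y := max_le (le_trans hA hCA) (le_trans hQ hCQ)
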